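/- arXiv:2202.09220 — 3 statements merged into one kernel-verified Lean document; each statement's English description precedes it below -/
import Mathlib

section
/- Let Z and V be vector spaces with bilinear operations (·, ↼, ⇀, ▷, ◁, ω, *) where · : Z×Z→Z is a Zinbiel multiplication, ↼ : Z×V→Z, ⇀ : V×Z→Z, ▷ : Z×V→V, ◁ : V×Z→V, ω : V×V→Z, * : V×V→V. Then the multiplication (x,u)∘(y,v) := (x·y + x↼v + u⇀y + ω(u,v), x▷v + u◁y + u*v) on Z⊕V is a Zinbiel algebra if and only if the twelve compatibility conditions (Z1)–(Z12) of the extending-structure axioms hold (with i fixed), namely: (V, ◁, ▷) is a Z-bimodule; (x↼v)·y + (x▷v)⇀y = x·(v⇀y + y↼v) + x↼(v◁y + y▷v); (u⇀x)·y + (u◁x)⇀y = u⇀(x·y + y·x); ω(u,v)·x + (u*v)⇀x = u⇀(v⇀x + x↼v) + ω(u, v◁x + x▷v); (u*v)◁x = u◁(v⇀x + x↼v) + u*(v◁x + x▷v); (x·y)↼w = x·(y↼w + w⇀y) + x↼(y▷w + w◁y); (x↼v)↼w + ω(x▷v, w) = x·(ω(v,w) + ω(w,v)) + x↼(v*w +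 w*v); (x↼v)▷w + (x▷v)*w = x▷(v*w + w*v); (u⇀x)↼w + ω(u◁x, w) = u⇀(x↼w + w⇀x) + ω(u, w◁x + x▷w); (u⇀x)▷w + (u◁x)*w = u◁(x↼w + w⇀x) + u*(x▷w + w◁x); ω(u,v)↼w + ω(u*v, w) = u⇀(ω(v,w) + ω(w,v)) + ω(u, v*w + w*v); ω(u,v)▷w + (u*v)*w = u◁(ω(v,w) + ω(w,v)) + u*(v*w + w*v). -/
/-- The unified product multiplication on `Z ⊕ V` is a Zinbiel multiplication if
and only if the compatibility conditions (Z1)–(Z12) hold. -/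
theorem unified_product_zinbiel_iff
    (k Z V : Type*) [Field k] [AddCommGroup Z] [Module k Z]
    [AddCommGroup V] [Module k V]
    (mul : Z →ₗ[k] Z →ₗ[k] Z)
    (hl : Z →ₗ[k] V →ₗ[k] Z)  -- x ↼ v
    (hr : V →ₗ[k] Z →ₗ[k] Z)  -- u ⇀ y
    (tr : Z →ₗ[k] V →ₗ[k] V)  -- x ▷ v
    (tl : V →ₗ[k] Z →ₗ[k] V)  -- u ◁ y
    (ω : V →ₗ[k] V →ₗ[k] Z)
    (st : V →ₗ[k] V →ₗ[k] V)  -- u * v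
    (hzin : ∀ x y z : Z, mul (mul x y) z = mul x (mul y z + mul z y))
    (m : Z × V → Z × V → Z × V)
    (hm : ∀ p q : Z × V,
      m p q = (mul p.1 q.1 + hl p.1 q.2 + hr p.2 q.1 + ω p.2 q.2,
               tr p.1 q.2 + tl p.2 q.1 + st p.2 q.2)) :
    (∀ a b c : Z × V, m (m a b) c = m a (m b c + m c b)) ↔
    ((∀ (x y : Z) (w : V), tr (mul x y) w = tr x (tr y w + tl w y)) ∧
     (∀ (x : Z) (v : V) (z : Z), tl (tr x v) z = tr x (tl v z + tr z v)) ∧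
     (∀ (u : V) (y z : Z), tl (tl u y) z = tl u (mul y z + mul z y)) ∧
     -- (Z2)
     (∀ (x : Z) (v : V) (y : Z),
        mul (hl x v) y + hr (tr x v) y
          = mul x (hr v y + hl y v) + hl x (tl v y + tr y v)) ∧
     -- (Z3)
     (∀ (u : V) (x y : Z),
        mul (hr u x) y + hr (tl u x) y = hr u (mul x y + mul y x)) ∧
     -- (Z4)
     (∀ (u v : V) (x : Z),
        mul (ω u v) x + hr (st u v) x
          = hr u (hr v x + hl x v) + ω u (tl v x + tr x v)) ∧
     -- (Z5)
     (∀ (u v : V) (x : Z),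
        tl (st u v) x = tl u (hr v x + hl x v) + st u (tl v x + tr x v)) ∧
     -- (Z6)
     (∀ (x y : Z) (w : V),
        hl (mul x y) w = mul x (hl y w + hr w y) + hl x (tr y w + tl w y)) ∧
     -- (Z7)
     (∀ (x : Z) (v w : V),
        hl (hl x v) w + ω (tr x v) w
          = mul x (ω v w + ω w v) + hl x (st v w + st w v)) ∧
     -- (Z8)
     (∀ (x : Z) (v w : V),
        tr (hl x v) w + st (tr x v) w = tr x (st v w + st w v)) ∧
     -- (Z9)
     (∀ (u : V) (x : Z) (w : V),
        hl (hr u x) w + ω (tl u x) w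
          = hr u (hl x w + hr w x) + ω u (tl w x + tr x w)) ∧
     -- (Z10)
     (∀ (u : V) (x : Z) (w : V),
        tr (hr u x) w + st (tl u x) w
          = tl u (hl x w + hr w x) + st u (tr x w + tl w x)) ∧
     -- (Z11)
     (∀ (u v w : V),
        hl (ω u v) w + ω (st u v) w
          = hr u (ω v w + ω w v) + ω u (st v w + st w v)) ∧
     -- (Z12)
     (∀ (u v w : V),
        tr (ω u v) w + st (st u v) w
          = tl u (ω v w + ω w v) + st u (st v w + st w v))) := by
  constructor
  · intro h
    have key : ∀ a b c : Z × V,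
        ((m (m a b) c).1 = (m a (m b c + m c b)).1 ∧
         (m (m a b) c).2 = (m a (m b c + m c b)).2) := by
      intro a b c
      rw [h a b c]; exact ⟨rfl, rfl⟩
    refine ⟨?_, ?_, ?_, ?_, ?_, ?_, ?_, ?_, ?_, ?_, ?_, ?_, ?_, ?_⟩
    · intro x y w
      have := (key (x, 0) (y, 0) (0, w)).2
      simp only [hm, Prod.mk_add_mk, map_add, map_zero, LinearMap.add_apply,
        LinearMap.zero_apply, zero_add, add_zero, Prod.fst, Prod.snd] at this ⊢
      linear_combination (norm := abel1) this
    · intro x v z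
      have := (key (x, 0) (0, v) (z, 0)).2
      simp only [hm, Prod.mk_add_mk, map_add, map_zero, LinearMap.add_apply,
        LinearMap.zero_apply, zero_add, add_zero, Prod.fst, Prod.snd] at this ⊢
      linear_combination (norm := abel1) this
    · intro u y z
      have := (key (0, u) (y, 0) (z, 0)).2
      simp only [hm, Prod.mk_add_mk, map_add, map_zero, LinearMap.add_apply,
        LinearMap.zero_apply, zero_add, add_zero, Prod.fst, Prod.snd] at this ⊢
      linear_combination (norm := abel1) this
    · intro x v y
      have := (key (x, 0) (0, v) (y, 0)).1
      simp only [hm, Prod.mk_add_mk, map_add, map_zero, LinearMap.add_apply,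
        LinearMap.zero_apply, zero_add, add_zero, Prod.fst, Prod.snd] at this ⊢
      linear_combination (norm := abel1) this
    · intro u x y
      have := (key (0, u) (x, 0) (y, 0)).1
      simp only [hm, Prod.mk_add_mk, map_add, map_zero, LinearMap.add_apply,
        LinearMap.zero_apply, zero_add, add_zero, Prod.fst, Prod.snd] at this ⊢
      linear_combination (norm := abel1) this
    · intro u v x
      have := (key (0, u) (0, v) (x, 0)).1
      simp only [hm, Prod.mk_add_mk, map_add, map_zero, LinearMap.add_apply,
        LinearMap.zero_apply, zero_add, add_zero, Prod.fst, Prod.snd] at this ⊢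
      linear_combination (norm := abel1) this
    · intro u v x
      have := (key (0, u) (0, v) (x, 0)).2
      simp only [hm, Prod.mk_add_mk, map_add, map_zero, LinearMap.add_apply,
        LinearMap.zero_apply, zero_add, add_zero, Prod.fst, Prod.snd] at this ⊢
      linear_combination (norm := abel1) this
    · intro x y w
      have := (key (x, 0) (y, 0) (0, w)).1
      simp only [hm, Prod.mk_add_mk, map_add, map_zero, LinearMap.add_apply,
        LinearMap.zero_apply, zero_add, add_zero, Prod.fst, Prod.snd] at this ⊢
      linear_combination (norm := abel1) this
    · intro x v w
      have := (key (x, 0) (0, v) (0, w)).1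
      simp only [hm, Prod.mk_add_mk, map_add, map_zero, LinearMap.add_apply,
        LinearMap.zero_apply, zero_add, add_zero, Prod.fst, Prod.snd] at this ⊢
      linear_combination (norm := abel1) this
    · intro x v w
      have := (key (x, 0) (0, v) (0, w)).2
      simp only [hm, Prod.mk_add_mk, map_add, map_zero, LinearMap.add_apply,
        LinearMap.zero_apply, zero_add, add_zero, Prod.fst, Prod.snd] at this ⊢
      linear_combination (norm := abel1) this
    · intro u x w
      have := (key (0, u) (x, 0) (0, w)).1
      simp only [hm, Prod.mk_add_mk, map_add, map_zero, LinearMap.add_apply,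
        LinearMap.zero_apply, zero_add, add_zero, Prod.fst, Prod.snd] at this ⊢
      linear_combination (norm := abel1) this
    · intro u x w
      have := (key (0, u) (x, 0) (0, w)).2
      simp only [hm, Prod.mk_add_mk, map_add, map_zero, LinearMap.add_apply,
        LinearMap.zero_apply, zero_add, add_zero, Prod.fst, Prod.snd] at this ⊢
      linear_combination (norm := abel1) this
    · intro u v w
      have := (key (0, u) (0, v) (0, w)).1
      simp only [hm, Prod.mk_add_mk, map_add, map_zero, LinearMap.add_apply,
        LinearMap.zero_apply, zero_add, add_zero, Prod.fst, Prod.snd] at this ⊢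
      linear_combination (norm := abel1) this
    · intro u v w
      have := (key (0, u) (0, v) (0, w)).2
      simp only [hm, Prod.mk_add_mk, map_add, map_zero, LinearMap.add_apply,
        LinearMap.zero_apply, zero_add, add_zero, Prod.fst, Prod.snd] at this ⊢
      linear_combination (norm := abel1) this
  · rintro ⟨b1, b2, b3, z2, z3, z4, z5, z6, z7, z8, z9, z10, z11, z12⟩
    rintro ⟨x, u⟩ ⟨y, v⟩ ⟨z, w⟩
    have H1 := hzin x y z
    have H2 := z2 x v z
    have H3 := z3 u y z
    have H4 := z4 u v z
    have H6 := z6 x y w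
    have H7 := z7 x v w
    have H9 := z9 u y w
    have H11 := z11 u v w
    have G1 := b1 x y w
    have G2 := b2 x v z
    have G3 := b3 u y z
    have G5 := z5 u v z
    have G8 := z8 x v w
    have G10 := z10 u y w
    have G12 := z12 u v w
    simp only [hm, Prod.mk_add_mk, map_add, LinearMap.add_apply, Prod.mk.injEq,
      Prod.fst, Prod.snd] at H1 H2 H3 H4 H6 H7 H9 H11 G1 G2 G3 G5 G8 G10 G12 ⊢
    constructor
    · linear_combination (norm := abel1) H1 + H2 + H3 + H4 + H6 + H7 + H9 + H11
    · linear_combination (norm := abel1) G1 + G2 + G3 + G5 + G8 + G10 + G12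
end

section
/- Let E be a Zinbiel algebra, Z ⊆ E a subalgebra, and p : E → Z a linear projection with p(x) = x for all x ∈ Z, and set V := ker p. Define u⇀x := p(u·x), x↼u := p(x·u), x▷u := x·u − p(x·u), u◁x := u·x − p(u·x), ω(u,v) := p(u·v), u*v := u·v − p(u·v), for x,y ∈ Z, u,v ∈ V. Then the map ψ : Z⊕V → E, ψ(x,u) = x+u, is a linear isomorphism, and transporting the multiplication of E along ψ yields exactly the unified product multiplication (x,u)∘(y,v) = (x·y + x↼v + u⇀y + ω(u,v), x▷v + u◁y + u*v). -/
/-- Any Zinbiel algebra structure on `E` containing a subalgebra `Z`, with a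
linear projection `p` onto `Z` and complement `V = ker p`, is isomorphic (via
`(x,u) ↦ x + u`) to the unified product of `Z` and `V` with structure maps
obtained from `p`. -/
theorem unified_product_from_projection
    (k E : Type*) [Field k] [AddCommGroup E] [Module k E]
    (mul : E →ₗ[k] E →ₗ[k] E)
    (hzin : ∀ x y z : E, mul (mul x y) z = mul x (mul y z + mul z y))
    (Z : Submodule k E)
    (hZ : ∀ x ∈ Z, ∀ y ∈ Z, mul x y ∈ Z)
    (p : E →ₗ[k] E)
    (hpZ : ∀ x : E, p x ∈ Z)
    (hpid : ∀ x ∈ Z, p x = x) :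
    Function.Bijective
      (fun q : Z × (LinearMap.ker p) => (q.1 : E) + (q.2 : E)) ∧
    ∀ x ∈ Z, ∀ y ∈ Z, ∀ u ∈ LinearMap.ker p, ∀ v ∈ LinearMap.ker p,
      p (mul (x + u) (y + v))
          = mul x y + p (mul x v) + p (mul u y) + p (mul u v) ∧
      mul (x + u) (y + v) - p (mul (x + u) (y + v))
          = (mul x v - p (mul x v)) + (mul u y - p (mul u y))
              + (mul u v - p (mul u v)) := by
  constructor
  · constructor
    · rintro ⟨⟨x, hx⟩, ⟨u, hu⟩⟩ ⟨⟨y, hy⟩, ⟨v, hv⟩⟩ h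
      simp only [LinearMap.mem_ker] at hu hv
      simp only [Prod.mk.injEq, Subtype.mk.injEq] at h ⊢
      have hp : p (x + u) = p (y + v) := by rw [h]
      rw [map_add, map_add, hu, hv, hpid x hx, hpid y hy, add_zero, add_zero] at hp
      exact ⟨hp, by have := h; rw [hp] at this; exact add_left_cancel this⟩
    · intro e
      refine ⟨⟨⟨p e, hpZ e⟩, ⟨e - p e, ?_⟩⟩, by simp⟩
      simp [LinearMap.mem_ker, map_sub, hpid (p e) (hpZ e)]
  · intro x hx y hy u hu v hv
    simp only [LinearMap.mem_ker] at hu hv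
    have h1 : p (mul x y) = mul x y := hpid _ (hZ x hx y hy)
    have hexp : mul (x + u) (y + v) = mul x y + mul x v + mul u y + mul u v := by
      simp only [map_add, LinearMap.add_apply]; abel
    constructor
    · rw [hexp]; simp only [map_add, h1]
    · rw [hexp]; simp only [map_add, h1]; abel
end

section
/- Let E be a Zinbiel algebra that factorizes through subalgebras Z and V, i.e. Z and V are Zinbiel subalgebras of E with E = Z ⊕ V as vector spaces. Define, for x ∈ Z, u ∈ V, the components u⇀x := p_Z(u·x), u◁x := p_V(u·x), x↼u := p_Z(x·u), x▷u := p_V(x·u) where p_Z, p_V are the projections onto Z and V. Then the map (x,u) ↦ x+u is an isomorphism of Zinbiel algebras from the bicrossed product Z ⊕ V with multiplication (x,u)∘(y,v) = (x·y + x↼v + u⇀y, x▷v + u◁y + u·v) to E. -/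
/-- If a Zinbiel algebra `E` factorizes through subalgebras `Z` and `V`
(`E = Z ⊕ V`), then `(x,u) ↦ x + u` is an isomorphism of Zinbiel algebras from
the bicrossed product `Z ⊕ V` (with structure maps obtained from the
projections) to `E`. -/
theorem bicrossed_product_factorization
    (k E : Type*) [Field k] [AddCommGroup E] [Module k E]
    (mul : E →ₗ[k] E →ₗ[k] E)
    (hzin : ∀ x y z : E, mul (mul x y) z = mul x (mul y z + mul z y))
    (Z V : Submodule k E)
    (hZ : ∀ x ∈ Z, ∀ y ∈ Z, mul x y ∈ Z)
    (hV : ∀ u ∈ V, ∀ v ∈ V, mul u v ∈ V)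
    (h : IsCompl Z V) :
    Function.Bijective (fun q : Z × V => (q.1 : E) + (q.2 : E)) ∧
    ∀ (x y : Z) (u v : V),
      mul ((x : E) + (u : E)) ((y : E) + (v : E))
        = (mul x y
            + (Z.linearProjOfIsCompl V h (mul x v) : E)
            + (Z.linearProjOfIsCompl V h (mul u y) : E))
          + ((V.linearProjOfIsCompl Z h.symm (mul x v) : E)
            + (V.linearProjOfIsCompl Z h.symm (mul u y) : E)
            + mul u v) := by
  constructor
  · constructor
    · rintro ⟨x, u⟩ ⟨y, v⟩ hxy
      simp only at hxy
      have h1 : (x : E) - y = (v : E) - u := by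
        rw [sub_eq_sub_iff_add_eq_add, hxy]; abel
      have hz : ((x - y : Z) : E) ∈ Z := (x - y).2
      have hv : ((x - y : Z) : E) ∈ V := by
        rw [Submodule.coe_sub, h1]; exact V.sub_mem v.2 u.2
      have h0 : ((x - y : Z) : E) = 0 := by
        have : ((x - y : Z) : E) ∈ Z ⊓ V := ⟨hz, hv⟩
        simpa [h.inf_eq_bot] using this
      have hxy' : x = y := by
        apply Subtype.ext
        have := sub_eq_zero.mp (by simpa using h0 : (x : E) - y = 0)
        exact this
      subst hxy'
      have : (u : E) = v := add_left_cancel hxy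
      exact Prod.ext rfl (Subtype.ext this)
    · intro e
      exact ⟨(Z.linearProjOfIsCompl V h e, V.linearProjOfIsCompl Z h.symm e),
        Submodule.projection_add_projection_eq_self h e⟩
  · intro x y u v
    have hxv : (Z.linearProjOfIsCompl V h (mul x v) : E) + (V.linearProjOfIsCompl Z h.symm (mul x v) : E) = mul x v :=
      Submodule.projection_add_projection_eq_self h (mul x v)
    have huy : (Z.linearProjOfIsCompl V h (mul u y) : E) + (V.linearProjOfIsCompl Z h.symm (mul u y) : E) = mul u y :=
      Submodule.projection_add_projection_eq_self h (mul u y)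
    simp only [map_add, LinearMap.add_apply]
    conv_lhs => rw [← hxv, ← huy]
    abel
end
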